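/- For fixed N_c with 1 ≤ N_c < N_f, the Zipf cache-hit probability p_h(δ) = (Σ_{f=1}^{N_c} f^(-δ))/(Σ_{n=1}^{N_f} n^(-δ)) is strictly increasing in δ > 0. -/

import Mathlib

/-- For fixed `1 ≤ N_c < N_f`, the Zipf cache-hit probability
`p_h(δ) = (Σ_{f=1}^{N_c} f^{-δ}) / (Σ_{n=1}^{N_f} n^{-δ})` is strictly
increasing in the skew parameter `δ > 0`. -/
theorem stmt_14 (Nf Nc : ℕ) (hNc : 1 ≤ Nc) (hlt : Nc < Nf) :
    ∀ δ₁ δ₂ : ℝ, 0 < δ₁ → δ₁ < δ₂ →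
      (∑ f ∈ Finset.Icc 1 Nc, (f : ℝ) ^ (-δ₁)) /
          (∑ n ∈ Finset.Icc 1 Nf, (n : ℝ) ^ (-δ₁))
        < (∑ f ∈ Finset.Icc 1 Nc, (f : ℝ) ^ (-δ₂)) /
            (∑ n ∈ Finset.Icc 1 Nf, (n : ℝ) ^ (-δ₂)) := by
  intro δ₁ δ₂ hδ₁ hδ12
  set A₁ := ∑ f ∈ Finset.Icc 1 Nc, (f : ℝ) ^ (-δ₁) with hA₁
  set A₂ := ∑ f ∈ Finset.Icc 1 Nc, (f : ℝ) ^ (-δ₂) with hA₂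
  set B₁ := ∑ n ∈ Finset.Ioc Nc Nf, (n : ℝ) ^ (-δ₁) with hB₁
  set B₂ := ∑ n ∈ Finset.Ioc Nc Nf, (n : ℝ) ^ (-δ₂) with hB₂
  have hIcc : ∀ k : ℕ, Finset.Icc 1 k = Finset.Ioc 0 k := fun k => rfl
  have hsplit : ∀ δ : ℝ, (∑ n ∈ Finset.Icc 1 Nf, (n : ℝ) ^ (-δ)) =
      (∑ f ∈ Finset.Icc 1 Nc, (f : ℝ) ^ (-δ)) +
      (∑ n ∈ Finset.Ioc Nc Nf, (n : ℝ) ^ (-δ)) := by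
    intro δ
    rw [hIcc, hIcc, ← Finset.sum_Ioc_consecutive _ (Nat.zero_le Nc) (le_of_lt hlt)]
  have hposterm : ∀ (δ : ℝ) (n : ℕ), n ∈ Finset.Icc 1 Nc → (0:ℝ) < (n : ℝ) ^ (-δ) := by
    intro δ n hn
    have h1 : 1 ≤ n := (Finset.mem_Icc.mp hn).1
    exact Real.rpow_pos_of_pos (by exact_mod_cast h1) _
  have hposterm' : ∀ (δ : ℝ) (n : ℕ), n ∈ Finset.Ioc Nc Nf → (0:ℝ) < (n : ℝ) ^ (-δ) := by
    intro δ n hn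
    have h1 : Nc < n := (Finset.mem_Ioc.mp hn).1
    have h2 : 0 < n := lt_of_le_of_lt (Nat.zero_le Nc) h1
    exact Real.rpow_pos_of_pos (by exact_mod_cast h2) _
  have hAne : (Finset.Icc 1 Nc).Nonempty := ⟨1, Finset.mem_Icc.mpr ⟨le_refl 1, hNc⟩⟩
  have hBne : (Finset.Ioc Nc Nf).Nonempty := ⟨Nf, Finset.mem_Ioc.mpr ⟨hlt, le_refl _⟩⟩
  have hA₁pos : 0 < A₁ := Finset.sum_pos (hposterm δ₁) hAne
  have hA₂pos : 0 < A₂ := Finset.sum_pos (hposterm δ₂) hAne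
  have hB₁pos : 0 < B₁ := Finset.sum_pos (hposterm' δ₁) hBne
  have hB₂pos : 0 < B₂ := Finset.sum_pos (hposterm' δ₂) hBne
  rw [hsplit δ₁, hsplit δ₂]
  rw [div_lt_div_iff₀ (by linarith) (by linarith)]
  have key : A₁ * B₂ < A₂ * B₁ := by
    rw [Finset.sum_mul_sum, Finset.sum_mul_sum,
      ← Finset.sum_product', ← Finset.sum_product']
    apply Finset.sum_lt_sum_of_nonempty (hAne.product hBne)
    rintro ⟨f, n⟩ hfn
    rw [Finset.mem_product] at hfn
    obtain ⟨hf, hn⟩ := hfn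
    have hf1 : 1 ≤ f := (Finset.mem_Icc.mp hf).1
    have hfNc : f ≤ Nc := (Finset.mem_Icc.mp hf).2
    have hnNc : Nc < n := (Finset.mem_Ioc.mp hn).1
    have hfR : (0:ℝ) < f := by exact_mod_cast hf1
    have hnR : (0:ℝ) < n := by
      have : 0 < n := lt_of_le_of_lt (Nat.zero_le Nc) hnNc
      exact_mod_cast this
    have hfn' : (f:ℝ) < n := by exact_mod_cast lt_of_le_of_lt hfNc hnNc
    simp only
    have h1 : (f:ℝ) ^ (-δ₁) = (f:ℝ) ^ (-δ₂) * (f:ℝ) ^ (δ₂ - δ₁) := by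
      rw [← Real.rpow_add hfR]; ring_nf
    have h2 : (n:ℝ) ^ (-δ₁) = (n:ℝ) ^ (-δ₂) * (n:ℝ) ^ (δ₂ - δ₁) := by
      rw [← Real.rpow_add hnR]; ring_nf
    rw [h1, h2]
    have hkey : (f:ℝ) ^ (δ₂ - δ₁) < (n:ℝ) ^ (δ₂ - δ₁) :=
      Real.rpow_lt_rpow hfR.le hfn' (by linarith)
    have hp1 := Real.rpow_pos_of_pos hfR (-δ₂)
    have hp2 := Real.rpow_pos_of_pos hnR (-δ₂)
    calc (f:ℝ) ^ (-δ₂) * (f:ℝ) ^ (δ₂ - δ₁) * (n:ℝ) ^ (-δ₂)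
        < (f:ℝ) ^ (-δ₂) * (n:ℝ) ^ (δ₂ - δ₁) * (n:ℝ) ^ (-δ₂) := by
          apply mul_lt_mul_of_pos_right _ hp2
          exact mul_lt_mul_of_pos_left hkey hp1
      _ = (f:ℝ) ^ (-δ₂) * ((n:ℝ) ^ (-δ₂) * (n:ℝ) ^ (δ₂ - δ₁)) := by ring
  nlinarith [key, hA₁pos, hA₂pos]
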